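/- arXiv:1612.03411 — 2 statements merged into one kernel-verified Lean document; each statement's English description precedes it below -/
import Mathlib

section
/- For every β ∈ R', the number of β' ∈ R' with β' ∼ β equals φ(e(β)), where φ is Euler's totient function. -/
open Finset

section Setup

variable {n : ℕ}

/-- The index set `R' = ∏_j {0,…,r_j−1}`. -/
def Rfin' (r : Fin (n+1) → ℕ) : Finset (Fin (n+1) → ℕ) :=
  Fintype.piFinset fun j => Finset.range (r j)

/-- `|G| = r_1 ⋯ r_n`. -/
def cardG (r : Fin (n+1) → ℕ) : ℕ := ∏ j, r j

/-- `e(β) = lcm_j (r_j / gcd(r_j, β_j))`. -/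
def eOf (r : Fin (n+1) → ℕ) (β : Fin (n+1) → ℕ) : ℕ :=
  Finset.univ.lcm fun j => r j / Nat.gcd (r j) (β j)

/-- `A_β`. -/
def Aset (r : Fin (n+1) → ℕ) (β : Fin (n+1) → ℕ) : Finset (Fin (n+1) → ℕ) :=
  (Fintype.piFinset fun j => Finset.Icc 1 (r j)).filter
    fun ω => (∑ j, (r (Fin.last n) / r j) * ω j * β j) % r (Fin.last n) = 0

/-- `A_{β,p}`. -/
def Apset (r : Fin (n+1) → ℕ) (p : ℕ) (β : Fin (n+1) → ℕ) : Finset (Fin (n+1) → ℕ) :=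
  (Fintype.piFinset fun j => Finset.Icc 1 (p ^ padicValNat p (r j))).filter
    fun ω => (∑ j, p ^ (padicValNat p (r (Fin.last n)) - padicValNat p (r j)) * ω j * β j)
      % p ^ padicValNat p (r (Fin.last n)) = 0

end Setup

section Aux
variable {n : ℕ}


def liftj (r : Fin (n+1) → ℕ) (hd : ∀ j, r j ∣ r (Fin.last n)) (j : Fin (n+1)) :
    ZMod (r j) →+ ZMod (r (Fin.last n)) :=
  ZMod.lift (r j) ⟨(AddMonoidHom.mulLeft ((r (Fin.last n) / r j : ℕ) : ZMod (r (Fin.last n)))).comp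
      (Int.castAddHom (ZMod (r (Fin.last n)))), by
    simp only [AddMonoidHom.coe_comp, Function.comp_apply, Int.coe_castAddHom,
      AddMonoidHom.coe_mulLeft]
    push_cast
    rw [← Nat.cast_mul, Nat.div_mul_cancel (hd j), ZMod.natCast_self]⟩

lemma liftj_natCast (r : Fin (n+1) → ℕ) (hd : ∀ j, r j ∣ r (Fin.last n)) (j : Fin (n+1)) (m : ℕ) :
    liftj r hd j (m : ZMod (r j)) =
      ((r (Fin.last n) / r j * m : ℕ) : ZMod (r (Fin.last n))) := by
  have h1 : ((m : ℕ) : ZMod (r j)) = ((m : ℤ) : ZMod (r j)) := by push_cast; rfl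
  rw [liftj, h1, ZMod.lift_coe]
  simp only [AddMonoidHom.coe_comp, Function.comp_apply, Int.coe_castAddHom,
    AddMonoidHom.coe_mulLeft]
  push_cast
  ring

lemma liftj_r_smul (r : Fin (n+1) → ℕ) (hd : ∀ j, r j ∣ r (Fin.last n)) (j : Fin (n+1))
    (x : ZMod (r j)) : r j • liftj r hd j x = 0 := by
  rw [← map_nsmul]
  convert map_zero (liftj r hd j)
  rw [nsmul_eq_mul, ZMod.natCast_self, zero_mul]

def phiF (r : Fin (n+1) → ℕ) (hd : ∀ j, r j ∣ r (Fin.last n)) (β : Fin (n+1) → ℕ) :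
    ((j : Fin (n+1)) → ZMod (r j)) →+ ZMod (r (Fin.last n)) :=
  AddMonoidHom.mk' (fun g => ∑ j, β j • liftj r hd j (g j)) (by
    intro a b
    rw [← Finset.sum_add_distrib]
    exact Finset.sum_congr rfl fun j _ => by rw [Pi.add_apply, map_add, smul_add])

lemma phiF_apply (r : Fin (n+1) → ℕ) (hd : ∀ j, r j ∣ r (Fin.last n)) (β : Fin (n+1) → ℕ)
    (g : (j : Fin (n+1)) → ZMod (r j)) :
    phiF r hd β g = ∑ j, β j • liftj r hd j (g j) := rfl

def piNat (r : Fin (n+1) → ℕ) (ω : Fin (n+1) → ℕ) : (j : Fin (n+1)) → ZMod (r j) :=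
  fun j => (ω j : ZMod (r j))

lemma phiF_piNat (r : Fin (n+1) → ℕ) (hd : ∀ j, r j ∣ r (Fin.last n)) (β ω : Fin (n+1) → ℕ) :
    phiF r hd β (piNat r ω) =
      ((∑ j, (r (Fin.last n) / r j) * ω j * β j : ℕ) : ZMod (r (Fin.last n))) := by
  rw [phiF_apply, Nat.cast_sum]
  exact Finset.sum_congr rfl fun j _ => by
    rw [piNat, liftj_natCast, nsmul_eq_mul]; push_cast; ring


lemma mem_Aset_iff (r : Fin (n+1) → ℕ) (hd : ∀ j, r j ∣ r (Fin.last n)) (β ω : Fin (n+1) → ℕ) :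
    ω ∈ Aset r β ↔ (∀ j, ω j ∈ Finset.Icc 1 (r j)) ∧ phiF r hd β (piNat r ω) = 0 := by
  rw [Aset, Finset.mem_filter, Fintype.mem_piFinset, phiF_piNat,
    ZMod.natCast_eq_zero_iff, Nat.dvd_iff_mod_eq_zero]

lemma exists_rep (r : Fin (n+1) → ℕ) (hr : ∀ j, 0 < r j) (g : (j : Fin (n+1)) → ZMod (r j)) :
    ∃ ω : Fin (n+1) → ℕ, (∀ j, ω j ∈ Finset.Icc 1 (r j)) ∧ piNat r ω = g := by
  haveI : ∀ j, NeZero (r j) := fun j => ⟨(hr j).ne'⟩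
  refine ⟨fun j => if (g j).val = 0 then r j else (g j).val, fun j => ?_, ?_⟩
  · by_cases h : (g j).val = 0 <;> simp [h, Finset.mem_Icc, hr j, (hr j).ne', Nat.one_le_iff_ne_zero,
      (ZMod.val_lt (g j)).le]
  · funext j
    by_cases h : (g j).val = 0
    · simp only [piNat, h, if_pos]
      rw [ZMod.natCast_self]
      exact (((ZMod.val_eq_zero (g j)).mp h)).symm
    · simp only [piNat, h, if_neg, ite_false]
      exact ZMod.natCast_zmod_val (g j)

lemma Aset_eq_iff (r : Fin (n+1) → ℕ) (hr : ∀ j, 0 < r j) (hd : ∀ j, r j ∣ r (Fin.last n))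
    (β β' : Fin (n+1) → ℕ) :
    Aset r β' = Aset r β ↔ ∀ g, (phiF r hd β' g = 0 ↔ phiF r hd β g = 0) := by
  constructor
  · intro h g
    obtain ⟨ω, hbox, rfl⟩ := exists_rep r hr g
    have := Finset.ext_iff.mp h ω
    rw [mem_Aset_iff r hd, mem_Aset_iff r hd] at this
    constructor
    · intro h0; exact (this.mp ⟨hbox, h0⟩).2
    · intro h0; exact (this.mpr ⟨hbox, h0⟩).2
  · intro h
    ext ω
    rw [mem_Aset_iff r hd, mem_Aset_iff r hd, h (piNat r ω)]

lemma phiF_inj (r : Fin (n+1) → ℕ) (hr : ∀ j, 0 < r j) (hd : ∀ j, r j ∣ r (Fin.last n))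
    {β β' : Fin (n+1) → ℕ} (hβ : ∀ j, β j < r j) (hβ' : ∀ j, β' j < r j)
    (h : ∀ g, phiF r hd β g = phiF r hd β' g) : β = β' := by
  funext j
  have hj := h (piNat r (fun i => if i = j then 1 else 0))
  rw [phiF_piNat, phiF_piNat] at hj
  have hsum : ∀ γ : Fin (n+1) → ℕ,
      (∑ i, (r (Fin.last n) / r i) * (if i = j then 1 else 0) * γ i)
        = r (Fin.last n) / r j * γ j := by
    intro γ
    rw [Finset.sum_eq_single j]
    · simp
    · intro i _ hij; simp [hij]
    · simp
  rw [hsum, hsum, ZMod.natCast_eq_natCast_iff] at hj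
  set c := r (Fin.last n) / r j with hcdef
  have hNeq : r (Fin.last n) = c * r j := (Nat.div_mul_cancel (hd j)).symm
  rw [hNeq] at hj
  have hc : c ≠ 0 := by
    have := Nat.div_pos (Nat.le_of_dvd (hr _) (hd j)) (hr j)
    omega
  have := Nat.ModEq.mul_left_cancel' hc hj
  rw [Nat.ModEq] at this
  rwa [Nat.mod_eq_of_lt (hβ j), Nat.mod_eq_of_lt (hβ' j)] at this


section A
variable (r : Fin (n+1) → ℕ) (hNpos : 0 < r (Fin.last n))

lemma hkey_aux (hNpos : 0 < r (Fin.last n)) :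
    ∀ a b : ℕ, a ∣ b → b ∣ r (Fin.last n) →
      r (Fin.last n) / b * (b / a) = r (Fin.last n) / a := by
  intro a b hab hbN
  have hb : 0 < b := Nat.pos_of_dvd_of_pos hbN hNpos
  have ha : 0 < a := Nat.pos_of_dvd_of_pos hab hb
  have h1 : r (Fin.last n) = (r (Fin.last n) / b * (b / a)) * a := by
    rw [mul_assoc, Nat.div_mul_cancel hab, Nat.div_mul_cancel hbN]
  conv_rhs => rw [h1]
  rw [Nat.mul_div_cancel _ ha]

lemma hgcd_div (hNpos : 0 < r (Fin.last n)) :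
    ∀ a b : ℕ, a ∣ r (Fin.last n) → b ∣ r (Fin.last n) →
      Nat.gcd (r (Fin.last n) / a) (r (Fin.last n) / b)
        = r (Fin.last n) / Nat.lcm a b := by
  intro a b haN hbN
  set N := r (Fin.last n) with hN
  have ha : 0 < a := Nat.pos_of_dvd_of_pos haN hNpos
  have hb : 0 < b := Nat.pos_of_dvd_of_pos hbN hNpos
  have hL : Nat.lcm a b ∣ N := Nat.lcm_dvd haN hbN
  have hLpos : 0 < Nat.lcm a b := Nat.pos_of_dvd_of_pos hL hNpos
  apply Nat.dvd_antisymm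
  · set d := Nat.gcd (N/a) (N/b) with hddef
    have hd0 : 0 < d := Nat.gcd_pos_of_pos_left _ (Nat.div_pos (Nat.le_of_dvd hNpos haN) ha)
    have hadN : a ∣ N / d := by
      obtain ⟨t, ht⟩ := Nat.gcd_dvd_left (N/a) (N/b)
      refine ⟨t, ?_⟩
      have h2 : N = (a * t) * d := by
        calc N = (N/a)*a := (Nat.div_mul_cancel haN).symm
        _ = (d*t)*a := by rw [ht, ← hddef]
        _ = (a*t)*d := by ring
      rw [h2, Nat.mul_div_cancel _ hd0]
    have hbdN : b ∣ N / d := by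
      obtain ⟨t, ht⟩ := Nat.gcd_dvd_right (N/a) (N/b)
      refine ⟨t, ?_⟩
      have h2 : N = (b * t) * d := by
        calc N = (N/b)*b := (Nat.div_mul_cancel hbN).symm
        _ = (d*t)*b := by rw [ht, ← hddef]
        _ = (b*t)*d := by ring
      rw [h2, Nat.mul_div_cancel _ hd0]
    obtain ⟨u, hu⟩ := Nat.lcm_dvd hadN hbdN
    refine ⟨u, ?_⟩
    have hdN : d ∣ N := (Nat.gcd_dvd_left (N/a) (N/b)).trans ⟨a, (Nat.div_mul_cancel haN).symm⟩
    have h2 : N = (d * u) * Nat.lcm a b := by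
      calc N = (N/d)*d := (Nat.div_mul_cancel hdN).symm
      _ = (Nat.lcm a b * u)*d := by rw [hu]
      _ = (d*u)*Nat.lcm a b := by ring
    rw [h2, Nat.mul_div_cancel _ hLpos]
  · apply Nat.dvd_gcd
    · exact ⟨Nat.lcm a b / a, (hkey_aux r hNpos a (Nat.lcm a b) (Nat.dvd_lcm_left a b) hL).symm⟩
    · exact ⟨Nat.lcm a b / b, (hkey_aux r hNpos b (Nat.lcm a b) (Nat.dvd_lcm_right a b) hL).symm⟩
end A

end Aux

theorem stmt_15 (r : Fin (n+1) → ℕ) (hr : ∀ j, 0 < r j)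
    (hchain : ∀ i j : Fin (n+1), i ≤ j → r i ∣ r j)
    (β : Fin (n+1) → ℕ) (hβ : β ∈ Rfin' r) :
    ((Rfin' r).filter fun β' => Aset r β' = Aset r β).card = Nat.totient (eOf r β) := by
  classical
  have hd : ∀ j, r j ∣ r (Fin.last n) := fun j => hchain j (Fin.last n) (Fin.le_last j)
  have hNpos : 0 < r (Fin.last n) := hr _
  haveI inst1 : ∀ j, NeZero (r j) := fun j => ⟨(hr j).ne'⟩
  haveI : NeZero (r (Fin.last n)) := inst1 _
  have hβlt : ∀ j, β j < r j := fun j => by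
    have := Fintype.mem_piFinset.mp hβ j; simpa using this
  have hgpos : ∀ j, 0 < Nat.gcd (r j) (β j) := fun j => Nat.gcd_pos_of_pos_left _ (hr j)
  have hejdvd_r : ∀ j, r j / Nat.gcd (r j) (β j) ∣ r j :=
    fun j => Nat.div_dvd_of_dvd (Nat.gcd_dvd_left _ _)
  have hejdvd : ∀ j, r j / Nat.gcd (r j) (β j) ∣ eOf r β :=
    fun j => Finset.dvd_lcm (Finset.mem_univ j)
  have heN : eOf r β ∣ r (Fin.last n) := Finset.lcm_dvd fun j _ => (hejdvd_r j).trans (hd j)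
  have hepos : 0 < eOf r β := Nat.pos_of_dvd_of_pos heN hNpos
  have hNepos : 0 < r (Fin.last n) / eOf r β := Nat.div_pos (Nat.le_of_dvd hNpos heN) hepos
  -- (N/e) divides each coefficient (N / r j) * β j
  have hterm : ∀ j, r (Fin.last n) / eOf r β ∣ r (Fin.last n) / r j * β j := by
    intro j
    have h2 : r j / (r j / Nat.gcd (r j) (β j)) = Nat.gcd (r j) (β j) :=
      Nat.div_div_self (Nat.gcd_dvd_left _ _) (hr j).ne'
    have h1 : r (Fin.last n) / (r j / Nat.gcd (r j) (β j)) * (β j / Nat.gcd (r j) (β j))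
        = r (Fin.last n) / r j * β j := by
      rw [← hkey_aux r hNpos (r j / Nat.gcd (r j) (β j)) (r j) (hejdvd_r j) (hd j), h2,
        mul_assoc, Nat.mul_div_cancel' (Nat.gcd_dvd_right _ _)]
    have h3 : r (Fin.last n) / eOf r β ∣ r (Fin.last n) / (r j / Nat.gcd (r j) (β j)) :=
      ⟨eOf r β / (r j / Nat.gcd (r j) (β j)),
        (hkey_aux r hNpos _ _ (hejdvd j) heN).symm⟩
    exact h1 ▸ h3.mul_right _
  -- every value of phiF β is a multiple of N/e
  have hL3 : ∀ g, ∃ m : ℕ, phiF r hd β g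
      = ((m * (r (Fin.last n) / eOf r β) : ℕ) : ZMod (r (Fin.last n))) := by
    intro g
    obtain ⟨ω, hbox, rfl⟩ := exists_rep r hr g
    rw [phiF_piNat]
    have hdvd : (r (Fin.last n) / eOf r β) ∣ ∑ j, r (Fin.last n) / r j * ω j * β j :=
      Finset.dvd_sum fun j _ => by
        have h := (hterm j).mul_right (ω j)
        have heq : r (Fin.last n) / r j * β j * ω j = r (Fin.last n) / r j * ω j * β j := by
          ring
        rwa [heq] at h
    exact ⟨(∑ j, r (Fin.last n) / r j * ω j * β j) / (r (Fin.last n) / eOf r β),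
      by rw [Nat.div_mul_cancel hdvd]⟩
  -- vanishing criterion for multiples of N/e
  have hL4 : ∀ m : ℕ, (((m * (r (Fin.last n) / eOf r β)) : ℕ) : ZMod (r (Fin.last n))) = 0
      ↔ eOf r β ∣ m := by
    intro m
    rw [ZMod.natCast_eq_zero_iff]
    constructor
    · intro h
      have h2 : eOf r β * (r (Fin.last n) / eOf r β) ∣ m * (r (Fin.last n) / eOf r β) := by
        rwa [Nat.mul_div_cancel' heN]
      exact (Nat.mul_dvd_mul_iff_right hNepos).mp h2
    · rintro ⟨t, rfl⟩
      exact ⟨t, by rw [mul_comm (eOf r β) t, mul_assoc, Nat.mul_div_cancel' heN, mul_comm]⟩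
  -- each N / e_j is a value of phiF β
  have hsingle : ∀ j, ∃ g, phiF r hd β g
      = ((r (Fin.last n) / (r j / Nat.gcd (r j) (β j)) : ℕ) : ZMod (r (Fin.last n))) := by
    intro j
    haveI : NeZero (r j / Nat.gcd (r j) (β j)) :=
      ⟨(Nat.pos_of_dvd_of_pos (hejdvd_r j) (hr j)).ne'⟩
    have hcop : Nat.Coprime (β j / Nat.gcd (r j) (β j)) (r j / Nat.gcd (r j) (β j)) :=
      (Nat.coprime_div_gcd_div_gcd (hgpos j)).symm
    set m := (((β j / Nat.gcd (r j) (β j) : ℕ) : ZMod (r j / Nat.gcd (r j) (β j)))⁻¹).val with hm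
    have hinv := ZMod.coe_mul_inv_eq_one (n := r j / Nat.gcd (r j) (β j)) _ hcop
    have hmod : (β j / Nat.gcd (r j) (β j)) * m ≡ 1 [MOD r j / Nat.gcd (r j) (β j)] := by
      have : (((β j / Nat.gcd (r j) (β j)) * m : ℕ) : ZMod (r j / Nat.gcd (r j) (β j)))
          = ((1 : ℕ) : ZMod (r j / Nat.gcd (r j) (β j))) := by
        push_cast
        rw [hm, ZMod.natCast_zmod_val]
        exact_mod_cast hinv
      exact (ZMod.natCast_eq_natCast_iff _ _ _).mp this
    refine ⟨piNat r (fun i => if i = j then m else 0), ?_⟩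
    rw [phiF_piNat]
    have hsum : (∑ i, r (Fin.last n) / r i * (if i = j then m else 0) * β i)
        = r (Fin.last n) / r j * m * β j := by
      rw [Finset.sum_eq_single j]
      · simp
      · intro i _ hij; simp [hij]
      · simp
    rw [hsum]
    have h2 : r j / (r j / Nat.gcd (r j) (β j)) = Nat.gcd (r j) (β j) :=
      Nat.div_div_self (Nat.gcd_dvd_left _ _) (hr j).ne'
    have h1 : r (Fin.last n) / r j * m * β j
        = (r (Fin.last n) / (r j / Nat.gcd (r j) (β j)))
          * ((β j / Nat.gcd (r j) (β j)) * m) := by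
      rw [← hkey_aux r hNpos (r j / Nat.gcd (r j) (β j)) (r j) (hejdvd_r j) (hd j), h2]
      rw [mul_assoc (r (Fin.last n) / r j) (Nat.gcd (r j) (β j)) _,
        show Nat.gcd (r j) (β j) * (β j / Nat.gcd (r j) (β j) * m)
          = (Nat.gcd (r j) (β j) * (β j / Nat.gcd (r j) (β j))) * m by ring,
        Nat.mul_div_cancel' (Nat.gcd_dvd_right _ _)]
      ring
    rw [h1, ZMod.natCast_eq_natCast_iff]
    have h3 := Nat.ModEq.mul_left (r (Fin.last n) / (r j / Nat.gcd (r j) (β j))) hmod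
    have h4 := Nat.ModEq.mul_left' (c := r (Fin.last n) / (r j / Nat.gcd (r j) (β j))) hmod
    have hejN : r j / Nat.gcd (r j) (β j) ∣ r (Fin.last n) := (hejdvd_r j).trans (hd j)
    rwa [Nat.div_mul_cancel hejN, mul_one] at h4
  -- N/e is a value of phiF β
  have hmemrange : ∀ s : Finset (Fin (n+1)),
      ((r (Fin.last n) / s.lcm (fun j => r j / Nat.gcd (r j) (β j)) : ℕ)
        : ZMod (r (Fin.last n))) ∈ (phiF r hd β).range := by
    intro s
    induction s using Finset.induction_on with
    | empty => rw [Finset.lcm_empty, Nat.div_one, ZMod.natCast_self]; exact zero_mem _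
    | @insert j s' hj ih =>
      rw [Finset.lcm_insert, lcm_eq_nat_lcm]
      have hsN : s'.lcm (fun j => r j / Nat.gcd (r j) (β j)) ∣ r (Fin.last n) :=
        Finset.lcm_dvd fun i _ => (hejdvd_r i).trans (hd i)
      have hjN : r j / Nat.gcd (r j) (β j) ∣ r (Fin.last n) := (hejdvd_r j).trans (hd j)
      rw [← hgcd_div r hNpos _ _ hjN hsN]
      obtain ⟨gs, hgs⟩ := hsingle j
      have hamem : (((r (Fin.last n) / (r j / Nat.gcd (r j) (β j))) : ℕ)
          : ZMod (r (Fin.last n))) ∈ (phiF r hd β).range := ⟨gs, hgs⟩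
      set A := r (Fin.last n) / (r j / Nat.gcd (r j) (β j)) with hA
      set B := r (Fin.last n) / s'.lcm (fun j => r j / Nat.gcd (r j) (β j)) with hB
      have hbez : ((Nat.gcd A B : ℕ) : ZMod (r (Fin.last n)))
          = (Nat.gcdA A B) • ((A : ℕ) : ZMod (r (Fin.last n)))
            + (Nat.gcdB A B) • ((B : ℕ) : ZMod (r (Fin.last n))) := by
        have hb2 := Nat.gcd_eq_gcd_ab A B
        have hc := congrArg (fun z : ℤ => ((z : ℤ) : ZMod (r (Fin.last n)))) hb2
        push_cast at hc
        rw [zsmul_eq_mul, zsmul_eq_mul, hc]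
        ring
      rw [hbez]
      exact AddSubgroup.add_mem _ (AddSubgroup.zsmul_mem _ hamem _)
        (AddSubgroup.zsmul_mem _ ih _)
  obtain ⟨g₀, hg₀⟩ := AddMonoidHom.mem_range.mp (hmemrange Finset.univ)
  have hg₀ : phiF r hd β g₀
      = ((r (Fin.last n) / eOf r β : ℕ) : ZMod (r (Fin.last n))) := hg₀
  -- forward: kernel equality gives a coprime multiplier
  have hforward : ∀ β', (∀ g, (phiF r hd β' g = 0 ↔ phiF r hd β g = 0)) →
      ∃ k : ℕ, k < eOf r β ∧ Nat.Coprime (eOf r β) k ∧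
        (∀ g, phiF r hd β' g = k • phiF r hd β g) ∧
        (phiF r hd β' g₀).val / (r (Fin.last n) / eOf r β) = k := by
    intro β' hker
    have hex : eOf r β • phiF r hd β' g₀ = 0 := by
      rw [← map_nsmul]
      apply (hker _).mpr
      rw [map_nsmul, hg₀, nsmul_eq_mul, ← Nat.cast_mul]
      exact (hL4 _).mpr dvd_rfl
    have hx : phiF r hd β' g₀ = (((phiF r hd β' g₀).val : ℕ) : ZMod (r (Fin.last n))) :=
      (ZMod.natCast_zmod_val _).symm
    have hNev : (r (Fin.last n) / eOf r β) ∣ (phiF r hd β' g₀).val := by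
      have h2 : (((eOf r β * (phiF r hd β' g₀).val) : ℕ) : ZMod (r (Fin.last n))) = 0 := by
        rw [Nat.cast_mul, ← hx, ← nsmul_eq_mul]
        exact hex
      rw [ZMod.natCast_eq_zero_iff] at h2
      have h3 : (r (Fin.last n) / eOf r β) * eOf r β ∣ (phiF r hd β' g₀).val * eOf r β := by
        rw [Nat.div_mul_cancel heN]
        rwa [mul_comm] at h2
      exact (Nat.mul_dvd_mul_iff_right hepos).mp h3
    set v := (phiF r hd β' g₀).val with hvdef
    set k := v / (r (Fin.last n) / eOf r β) with hkdef
    have hvk : v = k * (r (Fin.last n) / eOf r β) := (Nat.div_mul_cancel hNev).symm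
    have hklt : k < eOf r β := by
      have hvlt : v < r (Fin.last n) := ZMod.val_lt _
      have h5 : k * (r (Fin.last n) / eOf r β) < eOf r β * (r (Fin.last n) / eOf r β) := by
        rw [← hvk, Nat.mul_div_cancel' heN]; exact hvlt
      exact Nat.lt_of_mul_lt_mul_right h5
    have hxk : phiF r hd β' g₀
        = ((k * (r (Fin.last n) / eOf r β) : ℕ) : ZMod (r (Fin.last n))) := by
      rw [hx, ← hvk]
    have hpoint : ∀ g, phiF r hd β' g = k • phiF r hd β g := by
      intro g
      obtain ⟨m, hm⟩ := hL3 g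
      have h0 : phiF r hd β (g - m • g₀) = 0 := by
        rw [map_sub, map_nsmul, hg₀, hm, nsmul_eq_mul, ← Nat.cast_mul, sub_eq_zero]
      have h1 : phiF r hd β' (g - m • g₀) = 0 := (hker _).mpr h0
      rw [map_sub, map_nsmul, sub_eq_zero] at h1
      rw [h1, hxk, hm, nsmul_eq_mul, nsmul_eq_mul, ← Nat.cast_mul, ← Nat.cast_mul]
      congr 1
      ring
    have hcop : Nat.Coprime (eOf r β) k := by
      by_contra hne
      set d := Nat.gcd (eOf r β) k with hddef
      have hd0 : 0 < d := Nat.gcd_pos_of_pos_left _ hepos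
      have hd1 : 1 < d := by
        have : d ≠ 1 := fun h => hne h
        omega
      have hde : d ∣ eOf r β := Nat.gcd_dvd_left _ _
      have hdk : d ∣ k := Nat.gcd_dvd_right _ _
      have hphig1 : phiF r hd β ((eOf r β / d) • g₀)
          = (((eOf r β / d) * (r (Fin.last n) / eOf r β) : ℕ) : ZMod (r (Fin.last n))) := by
        rw [map_nsmul, hg₀, nsmul_eq_mul, ← Nat.cast_mul]
      have hxpos : 0 < (eOf r β / d) * (r (Fin.last n) / eOf r β) :=
        Nat.mul_pos (Nat.div_pos (Nat.le_of_dvd hepos hde) hd0) hNepos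
      have hxd : (eOf r β / d) * (r (Fin.last n) / eOf r β) * d = r (Fin.last n) := by
        rw [mul_comm (eOf r β / d) _, mul_assoc, Nat.div_mul_cancel hde]
        exact Nat.div_mul_cancel heN
      have hne0 : ¬ (r (Fin.last n) ∣ (eOf r β / d) * (r (Fin.last n) / eOf r β)) := by
        intro hcon
        have hle := Nat.le_of_dvd hxpos hcon
        have h7 : (eOf r β / d) * (r (Fin.last n) / eOf r β) * 2
            ≤ (eOf r β / d) * (r (Fin.last n) / eOf r β) * d :=
          Nat.mul_le_mul le_rfl hd1
        rw [hxd] at h7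
        omega
      have h01 : phiF r hd β' ((eOf r β / d) • g₀) = 0 := by
        rw [map_nsmul, hxk, nsmul_eq_mul, ← Nat.cast_mul, ZMod.natCast_eq_zero_iff]
        obtain ⟨k', hk'⟩ := hdk
        refine ⟨k', ?_⟩
        rw [hk']
        calc (eOf r β / d) * ((d * k') * (r (Fin.last n) / eOf r β))
            = ((eOf r β / d) * d) * (r (Fin.last n) / eOf r β) * k' := by ring
          _ = eOf r β * (r (Fin.last n) / eOf r β) * k' := by rw [Nat.div_mul_cancel hde]
          _ = r (Fin.last n) * k' := by rw [Nat.mul_div_cancel' heN]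
      have hcon2 := (hker _).mp h01
      rw [hphig1, ZMod.natCast_eq_zero_iff] at hcon2
      exact hne0 hcon2
    exact ⟨k, hklt, hcop, hpoint, rfl⟩
  -- backward: every coprime multiplier is realized
  have hbackward : ∀ k : ℕ, k < eOf r β → Nat.Coprime (eOf r β) k →
      ∃ β' : Fin (n+1) → ℕ, (∀ j, β' j < r j) ∧
        (∀ g, (phiF r hd β' g = 0 ↔ phiF r hd β g = 0)) ∧
        (phiF r hd β' g₀).val / (r (Fin.last n) / eOf r β) = k := by
    intro k hklt hcop
    have hpt : ∀ g, phiF r hd (fun j => (k * β j) % r j) g = k • phiF r hd β g := by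
      intro g
      rw [phiF_apply, phiF_apply, Finset.smul_sum]
      refine Finset.sum_congr rfl fun j _ => ?_
      rw [smul_smul]
      conv_rhs => rw [← Nat.div_add_mod (k * β j) (r j)]
      rw [add_nsmul, mul_nsmul, liftj_r_smul, smul_zero, zero_add]
    refine ⟨fun j => (k * β j) % r j, fun j => Nat.mod_lt _ (hr j), fun g => ?_, ?_⟩
    · obtain ⟨m, hm⟩ := hL3 g
      rw [hpt g, hm, nsmul_eq_mul, ← Nat.cast_mul,
        show k * (m * (r (Fin.last n) / eOf r β))
          = (k * m) * (r (Fin.last n) / eOf r β) by ring,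
        hL4, hL4]
      constructor
      · intro h
        exact (Nat.Coprime.dvd_mul_left hcop).mp h
      · intro h
        exact Dvd.dvd.mul_left h k
    · rw [hpt g₀, hg₀, nsmul_eq_mul, ← Nat.cast_mul]
      have hlt : k * (r (Fin.last n) / eOf r β) < r (Fin.last n) := by
        have h5 : k * (r (Fin.last n) / eOf r β) < eOf r β * (r (Fin.last n) / eOf r β) :=
          Nat.mul_lt_mul_of_lt_of_le hklt le_rfl hNepos
        rwa [Nat.mul_div_cancel' heN] at h5
      rw [ZMod.val_natCast_of_lt hlt]
      exact Nat.mul_div_cancel _ hNepos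
  -- final counting
  rw [Nat.totient_eq_card_coprime]
  apply Finset.card_bij
    (fun β' _ => (phiF r hd β' g₀).val / (r (Fin.last n) / eOf r β))
  · intro a ha
    rw [Finset.mem_filter] at ha
    obtain ⟨k, hklt, hcop, hpointa, hkval⟩ := hforward a ((Aset_eq_iff r hr hd β a).mp ha.2)
    rw [hkval]
    exact Finset.mem_filter.mpr ⟨Finset.mem_range.mpr hklt, hcop⟩
  · intro a₁ ha₁ a₂ ha₂ hfe
    rw [Finset.mem_filter] at ha₁ ha₂
    obtain ⟨k₁, _, _, hp₁, hv₁⟩ := hforward a₁ ((Aset_eq_iff r hr hd β a₁).mp ha₁.2)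
    obtain ⟨k₂, _, _, hp₂, hv₂⟩ := hforward a₂ ((Aset_eq_iff r hr hd β a₂).mp ha₂.2)
    have hk12 : k₁ = k₂ := by rw [← hv₁, ← hv₂, hfe]
    have ha₁lt : ∀ j, a₁ j < r j := fun j => by
      have := Fintype.mem_piFinset.mp ha₁.1 j; simpa using this
    have ha₂lt : ∀ j, a₂ j < r j := fun j => by
      have := Fintype.mem_piFinset.mp ha₂.1 j; simpa using this
    exact phiF_inj r hr hd ha₁lt ha₂lt fun g => by rw [hp₁ g, hp₂ g, hk12]
  · intro k hk
    rw [Finset.mem_filter, Finset.mem_range] at hk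
    obtain ⟨β', hβ'lt, hker, hkval⟩ := hbackward k hk.1 hk.2
    refine ⟨β', Finset.mem_filter.mpr ⟨?_, (Aset_eq_iff r hr hd β β').mpr hker⟩, hkval⟩
    exact Fintype.mem_piFinset.mpr fun j => Finset.mem_range.mpr (hβ'lt j)
end

section
/- Let p be a prime dividing r_n and β ∈ R'. Consider the group homomorphism φ_{β,p} : ℤ/p^{v_p(r_1)}ℤ × ⋯ × ℤ/p^{v_p(r_n)}ℤ → ℤ/p^{v_p(r_n)}ℤ given by φ_{β,p}(x_1,…,x_n) = Σ_{j=1}^n p^{v_p(r_n)−v_p(r_j)}·β_j·x_j. Then the image of φ_{β,p} is the cyclic subgroup of ℤ/p^{v_p(r_n)}ℤ generated by the class of p^{v_p(r_n)−v_p(e(β))}; in particular the image has exactly p^{v_p(e(β))} elements and the kernel has exactly p^{v_p(r_1⋯r_n) − v_p(e(β))} elements. -/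
open Finset

lemma padicValNat_le_of_dvd' {p a b : ℕ} (hp : p.Prime) (hab : a ∣ b) (hb : b ≠ 0) :
    padicValNat p a ≤ padicValNat p b := by
  haveI : Fact p.Prime := ⟨hp⟩
  exact (padicValNat_dvd_iff_le hb).mp (dvd_trans pow_padicValNat_dvd hab)

lemma padicValNat_lcm' {p : ℕ} (hp : p.Prime) {a b : ℕ} (ha : a ≠ 0) (hb : b ≠ 0) :
    padicValNat p (Nat.lcm a b) = max (padicValNat p a) (padicValNat p b) := by
  have := DFunLike.congr_fun (Nat.factorization_lcm ha hb) p
  simpa [Nat.factorization_def _ hp, Finsupp.sup_apply] using this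

lemma padicValNat_finset_lcm {p : ℕ} (hp : p.Prime) {α : Type*} [DecidableEq α]
    (s : Finset α) (f : α → ℕ) (hf : ∀ j ∈ s, f j ≠ 0) :
    padicValNat p (s.lcm f) = s.sup fun j => padicValNat p (f j) := by
  induction s using Finset.induction with
  | empty => simp
  | @insert a s ha ih =>
    rw [Finset.lcm_insert, Finset.sup_insert]
    have hs : s.lcm f ≠ 0 := by
      simp only [Ne, Finset.lcm_eq_zero_iff]
      intro h
      obtain ⟨x, hx, hx0⟩ := by simpa using h
      exact hf x (Finset.mem_insert_of_mem hx) hx0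
    have : lcm (f a) (s.lcm f) = Nat.lcm (f a) (s.lcm f) := rfl
    rw [this, padicValNat_lcm' hp (hf a (Finset.mem_insert_self a s)) hs,
      ih fun j hj => hf j (Finset.mem_insert_of_mem hj)]

lemma padicValNat_gcd' {p : ℕ} (hp : p.Prime) {a b : ℕ} (ha : a ≠ 0) (hb : b ≠ 0) :
    padicValNat p (Nat.gcd a b) = min (padicValNat p a) (padicValNat p b) := by
  have := DFunLike.congr_fun (Nat.factorization_gcd ha hb) p
  simpa [Nat.factorization_def _ hp, Finsupp.inf_apply] using this

lemma padicValNat_prod' {p : ℕ} (hp : p.Prime) {α : Type*} (s : Finset α) (f : α → ℕ)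
    (hf : ∀ j ∈ s, f j ≠ 0) :
    padicValNat p (∏ j ∈ s, f j) = ∑ j ∈ s, padicValNat p (f j) := by
  haveI : Fact p.Prime := ⟨hp⟩
  classical
  induction s using Finset.induction with
  | empty => simp
  | @insert a s ha ih =>
    rw [Finset.prod_insert ha, Finset.sum_insert ha,
      padicValNat.mul (hf a (Finset.mem_insert_self a s))
        (Finset.prod_ne_zero_iff.mpr fun j hj => hf j (Finset.mem_insert_of_mem hj)),
      ih fun j hj => hf j (Finset.mem_insert_of_mem hj)]

lemma gcd_prime_pow' {p : ℕ} (hp : p.Prime) {a : ℕ} (M : ℕ) (ha : a ≠ 0) :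
    Nat.gcd a (p ^ M) = p ^ min (padicValNat p a) M := by
  haveI : Fact p.Prime := ⟨hp⟩
  obtain ⟨k, hkM, hk⟩ := (Nat.dvd_prime_pow hp).mp (Nat.gcd_dvd_right a (p ^ M))
  have hka : k ≤ padicValNat p a :=
    (padicValNat_dvd_iff_le ha).mp (hk ▸ Nat.gcd_dvd_left a (p ^ M))
  have hmin : p ^ min (padicValNat p a) M ∣ Nat.gcd a (p ^ M) :=
    Nat.dvd_gcd ((pow_dvd_pow p (min_le_left _ _)).trans pow_padicValNat_dvd)
      (pow_dvd_pow p (min_le_right _ _))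
  rw [hk] at hmin ⊢
  have := (Nat.pow_dvd_pow_iff_le_right hp.one_lt).mp hmin
  congr 1
  omega

lemma gcd_mem_zmultiples' (a N : ℕ) :
    ((Nat.gcd a N : ℕ) : ZMod N) ∈ AddSubgroup.zmultiples ((a : ℕ) : ZMod N) := by
  refine AddSubgroup.mem_zmultiples_iff.mpr ⟨Nat.gcdA a N, ?_⟩
  have h : (Nat.gcd a N : ℤ) = a * Nat.gcdA a N + N * Nat.gcdB a N := Nat.gcd_eq_gcd_ab a N
  have := congrArg (fun z : ℤ => (z : ZMod N)) h
  push_cast at this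
  rw [ZMod.natCast_self] at this
  rw [zsmul_eq_mul]
  rw [this]; push_cast; ring


lemma main_aux {n : ℕ} (p : ℕ) (hp : p.Prime) (M v : ℕ) (m : Fin (n+1) → ℕ)
    (β : Fin (n+1) → ℕ) (d : Fin (n+1) → ℕ)
    (φ : (∀ j : Fin (n+1), ZMod (p ^ m j)) →+ ZMod (p ^ M))
    (hφ : ∀ x, φ x = ∑ j, ((p ^ (M - m j) * β j : ℕ) : ZMod (p ^ M)) *
      ((x j).val : ZMod (p ^ M)))
    (hvM : v ≤ M) (hmM : ∀ j, m j ≤ M)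
    (hdm : ∀ j, d j ≤ m j) (hvsup : v = Finset.univ.sup d)
    (hdeq : ∀ j, β j ≠ 0 → d j = m j - min (m j) (padicValNat p (β j)))
    (hdzero : ∀ j, β j = 0 → d j = 0) :
    Set.range φ = ↑(AddSubgroup.zmultiples ((p ^ (M - v) : ℕ) : ZMod (p ^ M))) ∧
    Nat.card (Set.range φ) = p ^ v ∧
    Nat.card {x // φ x = 0} = p ^ ((∑ j, m j) - v) := by
  haveI : Fact p.Prime := ⟨hp⟩
  have hp0 : p ≠ 0 := hp.ne_zero
  have hdv : ∀ j, d j ≤ v := fun j => hvsup ▸ Finset.le_sup (Finset.mem_univ j)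
  -- key divisibility
  have hkey : ∀ j, p ^ (M - v) ∣ p ^ (M - m j) * β j := by
    intro j
    by_cases hbj : β j = 0
    · simp [hbj]
    · have h1 : p ^ min (m j) (padicValNat p (β j)) ∣ β j :=
        (pow_dvd_pow p (min_le_right _ _)).trans pow_padicValNat_dvd
      have hle : M - v ≤ (M - m j) + min (m j) (padicValNat p (β j)) := by
        have := hdeq j hbj; have := hdv j; have := hdm j; have := hmM j; omega
      calc p ^ (M - v) ∣ p ^ ((M - m j) + min (m j) (padicValNat p (β j))) :=
            pow_dvd_pow p hle
        _ = p ^ (M - m j) * p ^ min (m j) (padicValNat p (β j)) := pow_add p _ _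
        _ ∣ p ^ (M - m j) * β j := mul_dvd_mul_left _ h1
  set g : ZMod (p ^ M) := ((p ^ (M - v) : ℕ) : ZMod (p ^ M)) with hgdef
  -- each c_j is in the range
  have hc_mem : ∀ j, ((p ^ (M - m j) * β j : ℕ) : ZMod (p ^ M)) ∈ φ.range := by
    intro j
    by_cases hmj : m j = 0
    · have : ((p ^ (M - m j) * β j : ℕ) : ZMod (p ^ M)) = 0 := by
        rw [hmj, Nat.sub_zero, Nat.cast_mul, ZMod.natCast_self, zero_mul]
      rw [this]; exact zero_mem _
    · refine ⟨Pi.single j (1 : ZMod (p ^ m j)), ?_⟩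
      rw [hφ]
      rw [Finset.sum_eq_single j]
      · have h1 : (1 : ℕ) < p ^ m j := by
          calc 1 < p := hp.one_lt
            _ = p ^ 1 := (pow_one p).symm
            _ ≤ p ^ m j := Nat.pow_le_pow_right hp.pos (by omega)
        haveI : Fact (1 < p ^ m j) := ⟨h1⟩
        rw [Pi.single_eq_same, ZMod.val_one, Nat.cast_one, mul_one]
      · intro i _ hij
        haveI : NeZero (p ^ m i) := ⟨pow_ne_zero _ hp0⟩
        rw [Pi.single_eq_of_ne hij, ZMod.val_zero, Nat.cast_zero, mul_zero]
      · intro h; exact absurd (Finset.mem_univ j) h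
  -- range = zmultiples g
  have hrange : φ.range = AddSubgroup.zmultiples g := by
    apply le_antisymm
    · rintro x ⟨y, rfl⟩
      rw [hφ]
      apply AddSubgroup.sum_mem
      intro j _
      obtain ⟨t, ht⟩ := hkey j
      refine AddSubgroup.mem_zmultiples_iff.mpr ⟨((t * (y j).val : ℕ) : ℤ), ?_⟩
      rw [zsmul_eq_mul, hgdef, ht]
      push_cast
      ring
    · rw [AddSubgroup.zmultiples_le]
      obtain ⟨j, -, hj⟩ := Finset.exists_mem_eq_sup Finset.univ Finset.univ_nonempty d
      have hjv : d j = v := by rw [hvsup, hj]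
      have hgcd : Nat.gcd (p ^ (M - m j) * β j) (p ^ M) = p ^ (M - v) := by
        by_cases hbj : β j = 0
        · have : v = 0 := by rw [← hjv, hdzero j hbj]
          simp [hbj, this]
        · have hcne : p ^ (M - m j) * β j ≠ 0 :=
            mul_ne_zero (pow_ne_zero _ hp0) hbj
          rw [gcd_prime_pow' hp M hcne, padicValNat.mul (pow_ne_zero _ hp0) hbj,
            padicValNat.prime_pow]
          congr 1
          have h1 := hdeq j hbj
          have h2 := hdm j
          have h3 := hmM j
          omega
      have hg_in : g ∈ AddSubgroup.zmultiples
          (((p ^ (M - m j) * β j : ℕ) : ZMod (p ^ M))) := by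
        rw [hgdef, ← hgcd]
        exact gcd_mem_zmultiples' _ _
      obtain ⟨k, hk⟩ := AddSubgroup.mem_zmultiples_iff.mp hg_in
      rw [← hk]
      exact AddSubgroup.zsmul_mem _ (hc_mem j) k
  have hset : Set.range φ = ↑(AddSubgroup.zmultiples g) := by
    rw [← AddMonoidHom.coe_range, hrange]
  have hrangecard : Nat.card φ.range = p ^ v := by
    rw [hrange, Nat.card_zmultiples, hgdef,
      ZMod.addOrderOf_coe _ (pow_ne_zero M hp0),
      Nat.gcd_eq_right (pow_dvd_pow p (Nat.sub_le M v)),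
      Nat.pow_div (Nat.sub_le M v) hp.pos]
    congr 1
    omega
  refine ⟨hset, ?_, ?_⟩
  · rw [hset, SetLike.coe_sort_coe, ← hrange]
    exact hrangecard
  · have hker : Nat.card {x // φ x = 0} = Nat.card φ.ker :=
      Nat.card_congr (Equiv.subtypeEquivRight fun x =>
        (AddMonoidHom.mem_ker (f := φ) (x := x)).symm)
    have hdom : Nat.card (∀ j : Fin (n+1), ZMod (p ^ m j)) = p ^ ∑ j, m j := by
      rw [Nat.card_pi]
      simp only [Nat.card_zmod]
      rw [Finset.prod_pow_eq_pow_sum]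
    have hquot : Nat.card (_ ⧸ φ.ker) = Nat.card φ.range :=
      Nat.card_congr (QuotientAddGroup.quotientKerEquivRange φ).toEquiv
    have hlag := AddSubgroup.card_eq_card_quotient_mul_card_addSubgroup φ.ker
    have hvsum : v ≤ ∑ j, m j := by
      rcases Finset.exists_mem_eq_sup Finset.univ Finset.univ_nonempty d with ⟨j, -, hj⟩
      have h1 : d j ≤ m j := hdm j
      have h2 : m j ≤ ∑ i, m i :=
        Finset.single_le_sum (f := m) (fun i _ => Nat.zero_le _) (Finset.mem_univ j)
      omega
    have hEq : p ^ ∑ j, m j = p ^ v * Nat.card φ.ker := by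
      rw [← hdom, hlag, hquot, hrangecard]
    rw [hker]
    have hpow : p ^ v * p ^ (∑ j, m j - v) = p ^ v * Nat.card φ.ker := by
      rw [← hEq, ← pow_add]
      congr 1
      omega
    exact (Nat.eq_of_mul_eq_mul_left (pow_pos hp.pos v) hpow).symm

theorem stmt_18 (r : Fin (n+1) → ℕ) (hr : ∀ j, 0 < r j)
    (hchain : ∀ i j : Fin (n+1), i ≤ j → r i ∣ r j)
    (p : ℕ) (hp : p.Prime) (hpr : p ∣ r (Fin.last n))
    (β : Fin (n+1) → ℕ) (hβ : β ∈ Rfin' r)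
    (φ : (∀ j : Fin (n+1), ZMod (p ^ padicValNat p (r j))) →+
      ZMod (p ^ padicValNat p (r (Fin.last n))))
    (hφ : ∀ x, φ x = ∑ j, ((p ^ (padicValNat p (r (Fin.last n)) - padicValNat p (r j)) * β j : ℕ) :
        ZMod (p ^ padicValNat p (r (Fin.last n)))) * ((x j).val : ZMod (p ^ padicValNat p (r (Fin.last n))))) :
    Set.range φ = ↑(AddSubgroup.zmultiples
        ((p ^ (padicValNat p (r (Fin.last n)) - padicValNat p (eOf r β)) : ℕ) :
          ZMod (p ^ padicValNat p (r (Fin.last n))))) ∧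
    Nat.card (Set.range φ) = p ^ padicValNat p (eOf r β) ∧
    Nat.card {x // φ x = 0} = p ^ (padicValNat p (cardG r) - padicValNat p (eOf r β)) := by
  haveI : Fact p.Prime := ⟨hp⟩
  have hrne : ∀ j, r j ≠ 0 := fun j => (hr j).ne'
  have htdvd : ∀ j, r j / Nat.gcd (r j) (β j) ∣ r j := fun j =>
    Nat.div_dvd_of_dvd (Nat.gcd_dvd_left _ _)
  have htne : ∀ j, r j / Nat.gcd (r j) (β j) ≠ 0 := fun j =>
    Nat.div_ne_zero_iff_of_dvd (Nat.gcd_dvd_left _ _) |>.mpr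
      ⟨hrne j, Nat.gcd_ne_zero_left (hrne j)⟩
  have heOfdvd : eOf r β ∣ r (Fin.last n) :=
    Finset.lcm_dvd fun j _ => (htdvd j).trans (hchain j (Fin.last n) (Fin.le_last j))
  have hvM : padicValNat p (eOf r β) ≤ padicValNat p (r (Fin.last n)) :=
    padicValNat_le_of_dvd' hp heOfdvd (hrne _)
  have hmM : ∀ j, padicValNat p (r j) ≤ padicValNat p (r (Fin.last n)) :=
    fun j => padicValNat_le_of_dvd' hp (hchain j (Fin.last n) (Fin.le_last j)) (hrne _)
  have hdm : ∀ j, padicValNat p (r j / Nat.gcd (r j) (β j)) ≤ padicValNat p (r j) :=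
    fun j => padicValNat_le_of_dvd' hp (htdvd j) (hrne j)
  have hvsup : padicValNat p (eOf r β) =
      Finset.univ.sup fun j => padicValNat p (r j / Nat.gcd (r j) (β j)) := by
    rw [eOf, padicValNat_finset_lcm hp _ _ fun j _ => htne j]
  have hdeq : ∀ j, β j ≠ 0 → padicValNat p (r j / Nat.gcd (r j) (β j)) =
      padicValNat p (r j) - min (padicValNat p (r j)) (padicValNat p (β j)) := by
    intro j hbj
    rw [padicValNat.div_of_dvd (Nat.gcd_dvd_left _ _), padicValNat_gcd' hp (hrne j) hbj]
  have hdzero : ∀ j, β j = 0 → padicValNat p (r j / Nat.gcd (r j) (β j)) = 0 := by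
    intro j hbj
    simp [hbj, Nat.div_self (hr j)]
  have hGsum : padicValNat p (cardG r) = ∑ j, padicValNat p (r j) := by
    rw [cardG, padicValNat_prod' hp _ _ fun j _ => hrne j]
  have := main_aux p hp (padicValNat p (r (Fin.last n))) (padicValNat p (eOf r β))
    (fun j => padicValNat p (r j)) β
    (fun j => padicValNat p (r j / Nat.gcd (r j) (β j))) φ hφ hvM hmM hdm hvsup hdeq hdzero
  rw [hGsum]
  exact this
end
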